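/- If C is a pointed category with binary products in which the product of any two coequalizer diagrams is a coequalizer diagram (property (P)), then every product projection π₁ : X × Y → X is a normal epimorphism (a cokernel of some morphism). -/

import Mathlib

open CategoryTheory Limits

/-- `q` is a coequalizer of the parallel pair `(u, v)`. -/
def IsCoeq {C : Type*} [Category C] {T X Q : C} (u v : T ⟶ X) (q : X ⟶ Q) : Prop :=
  ∃ h : u ≫ q = v ≫ q, Nonempty (IsColimit (Cofork.ofπ q h))

/-- Property (P): the product of two coequalizer diagrams is a coequalizer diagram. -/
def PropertyP (C : Type*) [Category C] [HasBinaryProducts C] : Prop :=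
  ∀ {T₁ T₂ X X' Y Y' : C} (u v : T₁ ⟶ X) (u' v' : T₂ ⟶ Y) (q₁ : X ⟶ X') (q₂ : Y ⟶ Y'),
    IsCoeq u v q₁ → IsCoeq u' v' q₂ →
      IsCoeq (prod.map u u') (prod.map v v') (prod.map q₁ q₂)

/-- A normal epimorphism: a cokernel, i.e. a coequalizer of some morphism with the
zero morphism. -/
def IsNormalEpi {C : Type*} [Category C] [HasZeroMorphisms C] {X Q : C}
    (q : X ⟶ Q) : Prop :=
  ∃ (K : C) (k : K ⟶ X), IsCoeq k 0 q

open ZeroObject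

/-- The identity coequalizes any equal pair. -/
lemma isCoeq_self {C : Type*} [Category C] {T X : C} (u : T ⟶ X) : IsCoeq u u (𝟙 X) := by
  refine ⟨rfl, ⟨Cofork.IsColimit.mk _ (fun s => s.π) (fun s => Category.id_comp _)
    (fun s m hm => by simpa using hm)⟩⟩

/-- The zero morphism to the zero object coequalizes `(𝟙 Y, 0)`. -/
lemma isCoeq_to_zero {C : Type*} [Category C] [HasZeroObject C] [HasZeroMorphisms C]
    (Y : C) : IsCoeq (𝟙 Y) (0 : Y ⟶ Y) (0 : Y ⟶ 0) := by
  refine ⟨by simp, ⟨Cofork.IsColimit.mk _ (fun s => 0) (fun s => ?_) (fun s m hm => ?_)⟩⟩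
  · have h := s.condition
    rw [Category.id_comp, zero_comp] at h
    simp [h]
  · exact HasZeroObject.zeroIsInitial.hom_ext m 0

/-- Coequalizers are stable under composition with an isomorphism. -/
lemma isCoeq_comp_iso {C : Type*} [Category C] {T X Q Q' : C} {u v : T ⟶ X} {q : X ⟶ Q}
    (h : IsCoeq u v q) (i : Q ≅ Q') : IsCoeq u v (q ≫ i.hom) := by
  obtain ⟨w, ⟨hc⟩⟩ := h
  refine ⟨by rw [← Category.assoc, ← Category.assoc, w], ⟨?_⟩⟩
  exact IsColimit.ofIsoColimit hc (Cofork.ext i rfl)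

theorem stmt1 {C : Type*} [Category C] [HasZeroObject C] [HasZeroMorphisms C]
    [HasBinaryProducts C] (hP : PropertyP C) (X Y : C) :
    IsNormalEpi (prod.fst : X ⨯ Y ⟶ X) := by
  have h1 : IsCoeq (0 : Y ⟶ X) 0 (𝟙 X) := isCoeq_self _
  have h2 : IsCoeq (𝟙 Y) (0 : Y ⟶ Y) (0 : Y ⟶ 0) := isCoeq_to_zero Y
  have h3 := hP (0 : Y ⟶ X) 0 (𝟙 Y) 0 (𝟙 X) (0 : Y ⟶ 0) h1 h2
  have e0 : prod.map (0 : Y ⟶ X) (0 : Y ⟶ Y) = (0 : Y ⨯ Y ⟶ X ⨯ Y) := by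
    apply Limits.prod.hom_ext <;> simp
  rw [e0] at h3
  -- the iso `X ⨯ 0 ≅ X` given by the first projection
  let i : (X ⨯ (0 : C)) ≅ X :=
    { hom := prod.fst
      inv := prod.lift (𝟙 X) 0
      hom_inv_id := by
        apply Limits.prod.hom_ext
        · rw [Category.assoc]; erw [prod.lift_fst]; simp
        · exact HasZeroObject.zeroIsTerminal.hom_ext _ _
      inv_hom_id := by erw [prod.lift_fst] }
  have h4 := isCoeq_comp_iso h3 i
  have e1 : prod.map (𝟙 X) (0 : Y ⟶ 0) ≫ i.hom = (prod.fst : X ⨯ Y ⟶ X) := by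
    simp [i]
  rw [e1] at h4
  exact ⟨Y ⨯ Y, prod.map (0 : Y ⟶ X) (𝟙 Y), h4⟩
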